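/- Define F : ℝ → ℝ by F(0) = 0, F(t) = 1/10 if t > 0 and t is rational, and F(t) = 1 if t > 0 and t is irrational; let J(w) = ∑_{i=1}^3 F(|w_i|) on ℝ³. Then for every one-dimensional linear subspace ν of ℝ³ and every d > 0, there exist w ∈ ν with w ≠ 0, η ∈ ℝ³ with ‖η‖ < d‖w‖ (Euclidean norms), and T ⊆ {1,2,3} with |T| ≤ 1, such that J((w+η)_T) ≥ J((w+η)_{T^c}). (Hence for this non-monotone sparseness measure, no one-dimensional null space in ℝ³ satisfies the robust recovery condition at sparsity k = 1.) -/

import Mathlib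

noncomputable section

open scoped Classical in
/-- The non-monotone sparseness measure of Counter-example 2: `F(0) = 0`,
`F(t) = 1/10` for positive rational `t`, and `F(t) = 1` for positive irrational `t`. -/
noncomputable def F9 (t : ℝ) : ℝ :=
  if t = 0 then 0 else if Irrational t then 1 else 1 / 10

/-- The restricted cost `J(x_T) = ∑ i ∈ T, F |x i|`. -/
def costJT {n : ℕ} (F : ℝ → ℝ) (T : Finset (Fin n)) (x : EuclideanSpace ℝ (Fin n)) : ℝ :=
  ∑ i ∈ T, F |x i|

lemma F9_abs_irrational {t : ℝ} (ht : Irrational t) : F9 |t| = 1 := by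
  have h1 : Irrational |t| := by
    rcases abs_choice t with h | h <;> rw [h]
    exacts [ht, ht.neg]
  rw [F9, if_neg h1.ne_zero, if_pos h1]

lemma F9_rat_le (q : ℚ) : F9 |(q : ℝ)| ≤ 1 / 10 := by
  rw [F9]
  split_ifs with h0 h1
  · norm_num
  · refine absurd h1 ?_
    rw [show |(q : ℝ)| = ((|q| : ℚ) : ℝ) by push_cast; rfl]
    exact Rat.not_irrational _
  · exact le_refl _

theorem stmt9 (ν : Submodule ℝ (EuclideanSpace ℝ (Fin 3)))
    (hν : Module.finrank ℝ ν = 1) (d : ℝ) (hd : 0 < d) :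
    ∃ w : EuclideanSpace ℝ (Fin 3), w ∈ ν ∧ w ≠ 0 ∧
      ∃ η : EuclideanSpace ℝ (Fin 3), ‖η‖ < d * ‖w‖ ∧
        ∃ T : Finset (Fin 3), T.card ≤ 1 ∧
          costJT F9 Tᶜ (w + η) ≤ costJT F9 T (w + η) := by
  have hbot : ν ≠ ⊥ := by
    intro h; rw [h] at hν; simp at hν
  obtain ⟨w, hw, hw0⟩ := Submodule.exists_mem_ne_zero_of_ne_bot hbot
  refine ⟨w, hw, hw0, ?_⟩
  have hwn : (0:ℝ) < ‖w‖ := norm_pos_iff.mpr hw0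
  set ε := d * ‖w‖ / 4 with hε
  have hεpos : 0 < ε := by positivity
  obtain ⟨r, hr_irr, hr1, hr2⟩ := exists_irrational_btwn (show w 0 - ε < w 0 + ε by linarith)
  obtain ⟨q1, hq11, hq12⟩ := exists_rat_btwn (show w 1 - ε < w 1 + ε by linarith)
  obtain ⟨q2, hq21, hq22⟩ := exists_rat_btwn (show w 2 - ε < w 2 + ε by linarith)
  set η : EuclideanSpace ℝ (Fin 3) := WithLp.toLp 2 ![r - w 0, (q1:ℝ) - w 1, (q2:ℝ) - w 2] with hηdef
  refine ⟨η, ?_, {0}, by decide, ?_⟩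
  · rw [EuclideanSpace.norm_eq]
    rw [show d * ‖w‖ = Real.sqrt ((d * ‖w‖)^2) from (Real.sqrt_sq (by positivity)).symm]
    apply Real.sqrt_lt_sqrt (by positivity)
    rw [Fin.sum_univ_three]
    simp only [hηdef, Matrix.cons_val_zero, Matrix.cons_val_one, Matrix.head_cons,
      Matrix.cons_val_two, Matrix.tail_cons, Real.norm_eq_abs, sq_abs]
    have h1 : (r - w 0)^2 < ε^2 := by nlinarith [mul_pos (show (0:ℝ) < r - (w 0 - ε) by linarith) (show (0:ℝ) < w 0 + ε - r by linarith)]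
    have h2 : ((q1:ℝ) - w 1)^2 < ε^2 := by nlinarith [mul_pos (show (0:ℝ) < (q1:ℝ) - (w 1 - ε) by linarith) (show (0:ℝ) < w 1 + ε - q1 by linarith)]
    have h3 : ((q2:ℝ) - w 2)^2 < ε^2 := by nlinarith [mul_pos (show (0:ℝ) < (q2:ℝ) - (w 2 - ε) by linarith) (show (0:ℝ) < w 2 + ε - q2 by linarith)]
    have hεeq : d * ‖w‖ = 4 * ε := by rw [hε]; ring
    nlinarith [sq_nonneg ε]
  · have hx0 : (w + η) 0 = r := by
      simp [hηdef, PiLp.add_apply]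
    have hx1 : (w + η) 1 = (q1:ℝ) := by
      simp [hηdef, PiLp.add_apply]
    have hx2 : (w + η) 2 = (q2:ℝ) := by
      simp [hηdef, PiLp.add_apply]
    have hc : ({0}ᶜ : Finset (Fin 3)) = {1, 2} := by decide
    rw [costJT, costJT, hc]
    rw [Finset.sum_singleton, show ({1, 2} : Finset (Fin 3)) = insert 1 {2} from rfl,
      Finset.sum_insert (by decide), Finset.sum_singleton]
    rw [hx0, hx1, hx2, F9_abs_irrational hr_irr]
    have := F9_rat_le q1
    have := F9_rat_le q2
    linarith
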